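/- arXiv:0704.2572 — 8 statements merged into one kernel-verified Lean document; each statement's English description precedes it below -/
import Mathlib

section
/- Let T be an ℝ-tree and G a finitely generated group acting on T by isometries such that every element of G is elliptic (fixes a point). Then G has a global fixed point in T. -/
/-- A metric space is geodesic if every pair of points is joined by an isometrically
parametrized geodesic segment. -/
def IsGeodesicSpace (X : Type*) [MetricSpace X] : Prop :=
  ∀ x y : X, ∃ γ : ℝ → X, γ 0 = x ∧ γ (dist x y) = y ∧
    ∀ s ∈ Set.Icc (0 : ℝ) (dist x y), ∀ t ∈ Set.Icc (0 : ℝ) (dist x y),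
      dist (γ s) (γ t) = |s - t|

/-- The four point condition of `δ`-hyperbolicity:
`d(x,w) + d(y,z) ≤ max (d(x,y) + d(z,w), d(x,z) + d(y,w)) + 2δ`. -/
def FourPointHyperbolic (X : Type*) [MetricSpace X] (δ : ℝ) : Prop :=
  ∀ x y z w : X,
    dist x w + dist y z ≤ max (dist x y + dist z w) (dist x z + dist y w) + 2 * δ

section RTreeAux

variable {T : Type*} [MetricSpace T]

/-- `m` lies between `x` and `y`. -/
def RTBtw (x m y : T) : Prop := dist x m + dist m y = dist x y

/-- Convexity wrt metric betweenness. -/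
def RTConvex (A : Set T) : Prop :=
  ∀ ⦃x⦄, x ∈ A → ∀ ⦃y⦄, y ∈ A → ∀ ⦃m⦄, RTBtw x m y → m ∈ A

/-- In a 0-hyperbolic space, a point between `x` and `y` is determined by its
distance from `x`. -/
lemma rtbtw_unique (hhyp : FourPointHyperbolic T 0) {x m m' y : T}
    (h1 : RTBtw x m y) (h2 : RTBtw x m' y) (hd : dist x m = dist x m') : m = m' := by
  have h4 := hhyp x m m' y
  unfold RTBtw at h1 h2
  have e : dist x m + dist m' y = dist x m' + dist m y := by linarith
  rw [e, max_self] at h4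
  have : dist m m' ≤ 0 := by linarith
  exact dist_le_zero.mp this

/-- Medians exist in a geodesic 0-hyperbolic space. -/
lemma exists_median (hgeo : IsGeodesicSpace T) (hhyp : FourPointHyperbolic T 0)
    (x y z : T) : ∃ m : T, RTBtw x m y ∧ RTBtw x m z ∧ RTBtw y m z := by
  obtain ⟨γ, h0, hD, hI⟩ := hgeo x y
  set t : ℝ := (dist x y + dist x z - dist y z) / 2 with ht
  have tri1 : dist y z ≤ dist y x + dist x z := dist_triangle y x z
  have tri2 : dist x z ≤ dist x y + dist y z := dist_triangle x y z
  have cyx : dist y x = dist x y := dist_comm y x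
  have ht0 : 0 ≤ t := by rw [ht]; linarith
  have htD : t ≤ dist x y := by rw [ht]; linarith
  have hmem : t ∈ Set.Icc (0 : ℝ) (dist x y) := ⟨ht0, htD⟩
  have h1 : dist x (γ t) = t := by
    rw [← h0, hI 0 ⟨le_rfl, dist_nonneg⟩ t hmem, zero_sub, abs_neg, abs_of_nonneg ht0]
  have h2 : dist (γ t) y = dist x y - t := by
    have hh := hI t hmem (dist x y) ⟨dist_nonneg, le_rfl⟩
    rw [hD, abs_of_nonpos (by linarith : t - dist x y ≤ 0)] at hh
    rw [hh]; ring
  have h4 := hhyp x (γ t) z y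
  have e : dist x (γ t) + dist z y = dist x z + dist (γ t) y := by
    rw [h1, h2, dist_comm z y]; ring
  rw [e, max_self] at h4
  have hup : dist (γ t) z ≤ dist x z - t := by rw [h2] at h4; linarith
  have hlo : dist x z - t ≤ dist (γ t) z := by
    have := dist_triangle x (γ t) z; rw [h1] at this; linarith
  have h3 : dist (γ t) z = dist x z - t := le_antisymm hup hlo
  refine ⟨γ t, ?_, ?_, ?_⟩
  · unfold RTBtw; rw [h1, h2]; ring
  · unfold RTBtw; rw [h1, h3]; ring
  · unfold RTBtw; rw [dist_comm y (γ t), h2, h3]; linarith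

variable {G : Type*} [Group G] [MulAction G T]

/-- Fixed-point sets of isometries are convex. -/
lemma fix_convex (hhyp : FourPointHyperbolic T 0)
    (hiso : ∀ g : G, Isometry fun t : T => g • t) (g : G) :
    RTConvex {p : T | g • p = p} := by
  intro p hp q hq m hm
  have hd : ∀ a b : T, dist (g • a) (g • b) = dist a b := fun a b => (hiso g).dist_eq a b
  have h1 : dist p (g • m) = dist p m := by
    conv_lhs => rw [← hp]
    exact hd p m
  have h2 : dist (g • m) q = dist m q := by
    conv_lhs => rw [← hq]
    exact hd m q
  have hB : RTBtw p (g • m) q := by unfold RTBtw at hm ⊢; rw [h1, h2]; exact hm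
  exact (rtbtw_unique hhyp hm hB h1.symm).symm

/-- An elliptic isometry fixes the midpoint of `x` and `g • x`. -/
lemma elliptic_fixes_midpoint (hgeo : IsGeodesicSpace T) (hhyp : FourPointHyperbolic T 0)
    (hiso : ∀ g : G, Isometry fun t : T => g • t) (g : G) {p : T} (hp : g • p = p) (x : T) :
    ∃ m : T, RTBtw x m (g • x) ∧ dist x m = dist x (g • x) / 2 ∧ g • m = m := by
  have hd : ∀ a b : T, dist (g • a) (g • b) = dist a b := fun a b => (hiso g).dist_eq a b
  obtain ⟨γ, h0, hD, hI⟩ := hgeo p x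
  set r : ℝ := dist p x with hr
  set a : ℝ := dist x (g • x) / 2 with ha
  have hpgx : dist p (g • x) = r := by
    conv_lhs => rw [← hp]
    rw [hd p x]
  have ha0 : 0 ≤ a := by rw [ha]; positivity
  have h2a : 2 * a ≤ 2 * r := by
    have := dist_triangle x p (g • x)
    rw [dist_comm x p, hpgx] at this
    rw [ha]; linarith
  have hmem : r - a ∈ Set.Icc (0 : ℝ) r := ⟨by linarith, by linarith⟩
  set m : T := γ (r - a) with hm
  have h1 : dist p m = r - a := by
    rw [hm, ← h0, hI 0 ⟨le_rfl, dist_nonneg⟩ (r - a) hmem, zero_sub, abs_neg,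
      abs_of_nonneg (by linarith : (0:ℝ) ≤ r - a)]
  have h2 : dist m x = a := by
    have hh := hI (r - a) hmem r ⟨dist_nonneg, le_rfl⟩
    rw [hD, abs_of_nonpos (by linarith : r - a - r ≤ 0)] at hh
    rw [hm, hh]; ring
  -- dist m (g • x) = a
  have h4 := hhyp p m (g • x) x
  have e : dist p m + dist (g • x) x = dist p (g • x) + dist m x := by
    rw [h1, hpgx, h2, dist_comm (g • x) x]; rw [ha]; ring
  rw [e, max_self] at h4
  have h3up : dist m (g • x) ≤ a := by rw [hpgx, h2, hr] at h4; linarith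
  have h3lo : a ≤ dist m (g • x) := by
    have := dist_triangle x m (g • x)
    rw [dist_comm x m, h2] at this; rw [ha] at this ⊢; linarith
  have h3 : dist m (g • x) = a := le_antisymm h3up h3lo
  have hBm : RTBtw x m (g • x) := by
    unfold RTBtw; rw [dist_comm x m, h2, h3, ha]; ring
  -- now g • m is also a midpoint
  have g1 : dist p (g • m) = r - a := by
    conv_lhs => rw [← hp]
    rw [hd p m]; exact h1
  have g2 : dist (g • m) (g • x) = a := by rw [hd m x]; exact h2
  have h5 := hhyp p (g • m) x (g • x)
  have e2 : dist p (g • m) + dist x (g • x) = dist p x + dist (g • m) (g • x) := by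
    rw [g1, g2, ← hr, ha]; ring
  rw [e2, max_self] at h5
  have g3up : dist (g • m) x ≤ a := by rw [← hr, g2] at h5; rw [hpgx] at h5; linarith
  have g3lo : a ≤ dist (g • m) x := by
    have := dist_triangle x (g • m) (g • x)
    rw [dist_comm x (g • m), g2] at this; rw [ha] at this ⊢; linarith
  have g3 : dist (g • m) x = a := le_antisymm g3up g3lo
  have hBgm : RTBtw x (g • m) (g • x) := by
    unfold RTBtw; rw [dist_comm x (g • m), g3, g2, ha]; ring
  have hfix : g • m = m :=
    (rtbtw_unique hhyp hBm hBgm (by rw [dist_comm x m, h2, dist_comm x (g • m), g3])).symm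
  exact ⟨m, hBm, by rw [dist_comm x m, h2, ha], hfix⟩

/-- Serre's lemma: any two elements of an elliptic action share a fixed point. -/
lemma pairwise_fix (hgeo : IsGeodesicSpace T) (hhyp : FourPointHyperbolic T 0)
    (hiso : ∀ g : G, Isometry fun t : T => g • t)
    (hell : ∀ g : G, ∃ p : T, g • p = p) (g h : G) :
    ∃ m : T, g • m = m ∧ h • m = m := by
  obtain ⟨x, hx⟩ := hell (g * h)
  rw [mul_smul] at hx
  obtain ⟨p, hp⟩ := hell h
  obtain ⟨q, hq⟩ := hell g
  obtain ⟨m, hmB, hmd, hmfix⟩ := elliptic_fixes_midpoint hgeo hhyp hiso h hp x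
  obtain ⟨m', hm'B, hm'd, hm'fix⟩ := elliptic_fixes_midpoint hgeo hhyp hiso g hq (h • x)
  rw [hx] at hm'B hm'd
  -- hm'B : RTBtw (h • x) m' x, hm'd : dist (h • x) m' = dist (h • x) x / 2
  have hB2 : RTBtw x m' (h • x) := by
    unfold RTBtw at hm'B ⊢
    rw [dist_comm x m', dist_comm m' (h • x), dist_comm x (h • x)]
    linarith [hm'B]
  have hd2 : dist x m = dist x m' := by
    unfold RTBtw at hm'B
    rw [hmd]
    have : dist m' x = dist (h • x) x - dist (h • x) m' := by linarith
    rw [dist_comm x m', this, hm'd, dist_comm (h • x) x]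
    ring
  have hmm : m = m' := rtbtw_unique hhyp hmB hB2 hd2
  exact ⟨m, by rw [hmm]; exact hm'fix, hmfix⟩

/-- Helly property for three convex sets. -/
lemma helly3 (hgeo : IsGeodesicSpace T) (hhyp : FourPointHyperbolic T 0)
    {A B C : Set T} (hA : RTConvex A) (hB : RTConvex B) (hC : RTConvex C)
    (hab : (A ∩ B).Nonempty) (hac : (A ∩ C).Nonempty) (hbc : (B ∩ C).Nonempty) :
    (A ∩ B ∩ C).Nonempty := by
  obtain ⟨c, hcA, hcB⟩ := hab
  obtain ⟨b, hbA, hbC⟩ := hac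
  obtain ⟨a, haB, haC⟩ := hbc
  obtain ⟨m, hab', hac', hbc'⟩ := exists_median hgeo hhyp a b c
  exact ⟨m, ⟨hA hbA hcA hbc', hB haB hcB hac'⟩, hC haC hbC hab'⟩

/-- Helly property for finitely many convex sets. -/
lemma helly (hgeo : IsGeodesicSpace T) (hhyp : FourPointHyperbolic T 0) [Nonempty T] :
    ∀ (n : ℕ) (l : List (Set T)), l.length = n →
      (∀ A ∈ l, RTConvex A) → (∀ A ∈ l, ∀ B ∈ l, (A ∩ B).Nonempty) →
      ∃ p : T, ∀ A ∈ l, p ∈ A := by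
  intro n
  induction n with
  | zero =>
    intro l hl _ _
    cases l with
    | nil => exact ⟨Classical.arbitrary T, by simp⟩
    | cons C rest => simp at hl
  | succ n ih =>
    intro l hl hconv hpair
    cases l with
    | nil => simp at hl
    | cons C rest =>
      have hCmem : C ∈ C :: rest := List.mem_cons_self
      have hCconv : RTConvex C := hconv C hCmem
      cases rest with
      | nil =>
        obtain ⟨q, hq, _⟩ := hpair C hCmem C hCmem
        exact ⟨q, by intro A hA; simp at hA; rwa [hA]⟩
      | cons D rest' =>
        set rest := D :: rest' with hrest
        have hlen : (rest.map (· ∩ C)).length = n := by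
          simp at hl ⊢; omega
        have hconv' : ∀ A ∈ rest.map (· ∩ C), RTConvex A := by
          intro A hA
          obtain ⟨A₀, hA₀mem, rfl⟩ := List.mem_map.mp hA
          intro x hx y hy m hm
          exact ⟨hconv A₀ (List.mem_cons_of_mem C hA₀mem) hx.1 hy.1 hm,
            hCconv hx.2 hy.2 hm⟩
        have hpair' : ∀ A ∈ rest.map (· ∩ C), ∀ B ∈ rest.map (· ∩ C),
            (A ∩ B).Nonempty := by
          intro A hA B hB
          obtain ⟨A₀, hA₀mem, rfl⟩ := List.mem_map.mp hA
          obtain ⟨B₀, hB₀mem, rfl⟩ := List.mem_map.mp hB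
          have h3 := helly3 hgeo hhyp
            (hconv A₀ (List.mem_cons_of_mem C hA₀mem))
            (hconv B₀ (List.mem_cons_of_mem C hB₀mem)) hCconv
            (hpair A₀ (List.mem_cons_of_mem C hA₀mem) B₀ (List.mem_cons_of_mem C hB₀mem))
            (hpair A₀ (List.mem_cons_of_mem C hA₀mem) C hCmem)
            (hpair B₀ (List.mem_cons_of_mem C hB₀mem) C hCmem)
          obtain ⟨q, ⟨hqA, hqB⟩, hqC⟩ := h3
          exact ⟨q, ⟨hqA, hqC⟩, ⟨hqB, hqC⟩⟩
        obtain ⟨p, hp⟩ := ih (rest.map (· ∩ C)) hlen hconv' hpair'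
        have hpD : p ∈ D ∩ C := hp (D ∩ C)
          (List.mem_map.mpr ⟨D, List.mem_cons_self, rfl⟩)
        refine ⟨p, ?_⟩
        intro A hA
        rcases List.mem_cons.mp hA with rfl | hA'
        · exact hpD.2
        · exact (hp (A ∩ C) (List.mem_map.mpr ⟨A, hA', rfl⟩)).1

end RTreeAux

/-- If a finitely generated group `G` acts by isometries on an `ℝ`-tree (a complete
geodesic `0`-hyperbolic space) and every element of `G` is elliptic (fixes a point),
then `G` has a global fixed point. -/
theorem fg_elliptic_action_on_rtree_has_fixed_point
    {T : Type*} [MetricSpace T] [CompleteSpace T]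
    (hgeo : IsGeodesicSpace T) (hhyp : FourPointHyperbolic T 0)
    {G : Type*} [Group G] [MulAction G T]
    (hiso : ∀ g : G, Isometry fun t : T => g • t)
    (hfg : ∃ S : Finset G, Subgroup.closure (S : Set G) = ⊤)
    (hell : ∀ g : G, ∃ p : T, g • p = p) :
    ∃ p : T, ∀ g : G, g • p = p := by
  obtain ⟨S, hS⟩ := hfg
  have hne : Nonempty T := (hell 1).elim fun p _ => ⟨p⟩
  set l : List (Set T) := S.toList.map (fun g => {p : T | g • p = p}) with hl
  have hconv : ∀ A ∈ l, RTConvex A := by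
    intro A hA
    obtain ⟨g, _, rfl⟩ := List.mem_map.mp hA
    exact fix_convex hhyp hiso g
  have hpair : ∀ A ∈ l, ∀ B ∈ l, (A ∩ B).Nonempty := by
    intro A hA B hB
    obtain ⟨g, _, rfl⟩ := List.mem_map.mp hA
    obtain ⟨h, _, rfl⟩ := List.mem_map.mp hB
    obtain ⟨m, hg, hh⟩ := pairwise_fix hgeo hhyp hiso hell g h
    exact ⟨m, hg, hh⟩
  obtain ⟨p, hp⟩ := helly hgeo hhyp l.length l rfl hconv hpair
  refine ⟨p, ?_⟩
  have hSfix : ∀ s ∈ S, s • p = p := by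
    intro s hs
    exact hp {q : T | s • q = q}
      (List.mem_map.mpr ⟨s, Finset.mem_toList.mpr hs, rfl⟩)
  intro g
  have hmem : g ∈ Subgroup.closure (S : Set G) := by rw [hS]; exact Subgroup.mem_top g
  have hle : Subgroup.closure (S : Set G) ≤ MulAction.stabilizer G p := by
    rw [Subgroup.closure_le]
    intro s hs
    exact hSfix s hs
  exact hle hmem
end

section
/- In a proper geodesic δ-hyperbolic space, the set of centers of any bounded subset has diameter at most 100δ. (A center of a bounded set Y of radius r is a point c such that Y ⊆ B(c, r') for every r' > r, where the radius of Y is the infimum of r such that Y is contained in some ball of radius r.) -/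
/-- The radius of a bounded set: the infimum of `r` such that `Y` is contained in some
closed ball of radius `r`. -/
noncomputable def setRadius {X : Type*} [MetricSpace X] (Y : Set X) : ℝ :=
  sInf {r : ℝ | ∃ p : X, Y ⊆ Metric.closedBall p r}

/-- A center of a bounded set `Y`: a point `c` with `Y ⊆ B(c, r')` for every
`r' > radius Y`. -/
def IsCenter {X : Type*} [MetricSpace X] (Y : Set X) (c : X) : Prop :=
  ∀ r : ℝ, setRadius Y < r → Y ⊆ Metric.closedBall c r

/-- In a proper geodesic `δ`-hyperbolic space, the set of centers of a bounded set has
diameter at most `100δ`. -/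
theorem centers_diameter_le {X : Type*} [MetricSpace X] [ProperSpace X] (δ : ℝ)
    (hδ : 0 ≤ δ) (hgeo : IsGeodesicSpace X) (hhyp : FourPointHyperbolic X δ)
    (Y : Set X) (hne : Y.Nonempty) (hbdd : Bornology.IsBounded Y)
    (c₁ c₂ : X) (h₁ : IsCenter Y c₁) (h₂ : IsCenter Y c₂) :
    dist c₁ c₂ ≤ 100 * δ := by
  set d := dist c₁ c₂ with hd
  have hd0 : 0 ≤ d := dist_nonneg
  obtain ⟨γ, hγ0, hγd, hγ⟩ := hgeo c₁ c₂
  set m := γ (d / 2) with hm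
  have hmem0 : (0 : ℝ) ∈ Set.Icc (0 : ℝ) d := ⟨le_refl _, hd0⟩
  have hmemh : d / 2 ∈ Set.Icc (0 : ℝ) d := ⟨by linarith, by linarith⟩
  have hmemd : d ∈ Set.Icc (0 : ℝ) d := ⟨hd0, le_refl _⟩
  have hc1m : dist c₁ m = d / 2 := by
    have := hγ 0 hmem0 (d / 2) hmemh
    rw [hγ0] at this
    rw [hm, this]
    rw [abs_of_nonpos (by linarith)]; ring
  have hc2m : dist c₂ m = d / 2 := by
    have := hγ d hmemd (d / 2) hmemh
    rw [hγd] at this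
    rw [hm, this]
    rw [abs_of_nonneg (by linarith)]; ring
  set r := setRadius Y with hr
  have hbdd' : BddBelow {r : ℝ | ∃ p : X, Y ⊆ Metric.closedBall p r} := by
    refine ⟨0, fun s hs => ?_⟩
    obtain ⟨p, hp⟩ := hs
    obtain ⟨y, hy⟩ := hne
    have := hp hy
    have := dist_nonneg (x := y) (y := p)
    simp only [Metric.mem_closedBall] at *
    linarith
  have key : ∀ ε > (0 : ℝ), d ≤ 4 * δ + 2 * ε := by
    intro ε hε
    have h1 : Y ⊆ Metric.closedBall c₁ (r + ε) := h₁ _ (by linarith)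
    have h2 : Y ⊆ Metric.closedBall c₂ (r + ε) := h₂ _ (by linarith)
    have hmball : Y ⊆ Metric.closedBall m (r + ε - d / 2 + 2 * δ) := by
      intro y hy
      have hy1 : dist y c₁ ≤ r + ε := h1 hy
      have hy2 : dist y c₂ ≤ r + ε := h2 hy
      have hfour := hhyp y c₁ c₂ m
      rw [Metric.mem_closedBall]
      rw [hc1m, hc2m, ← hd] at hfour
      rcases max_le_iff.mp (le_refl (max (dist y c₁ + d / 2) (dist y c₂ + d / 2))) with ⟨_, _⟩
      have hmax : max (dist y c₁ + d / 2) (dist y c₂ + d / 2) ≤ r + ε + d / 2 := by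
        apply max_le <;> linarith
      calc dist y m ≤ max (dist y c₁ + d / 2) (dist y c₂ + d / 2) + 2 * δ - d := by
            linarith [hfour]
        _ ≤ r + ε - d / 2 + 2 * δ := by linarith
    have hle : r ≤ r + ε - d / 2 + 2 * δ := csInf_le hbdd' ⟨m, hmball⟩
    linarith
  have hd4 : d ≤ 4 * δ := by
    by_contra h
    push_neg at h
    have := key ((d - 4 * δ) / 4) (by linarith)
    linarith
  linarith
end

section
/- With generators as in the Grigorchuk group extended by the adding machine x, the identity [[[x,a],d],b] = (1, [[x,b],c]) holds in Aut(T) of the binary rooted tree. -/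
namespace GrigTree

/-- Vertices of the rooted binary tree: finite binary strings. -/
abbrev V := List Bool

/-- The rooted automorphism `a`, swapping the two first-level subtrees. -/
def aFun : V → V
  | [] => []
  | i :: w => (!i) :: w

lemma aFun_invol : ∀ w, aFun (aFun w) = w
  | [] => rfl
  | _ :: _ => by simp [aFun]

/-- The automorphism `a` as a permutation. -/
def a : Equiv.Perm V := ⟨aFun, aFun, aFun_invol, aFun_invol⟩

/-- The adding machine `x = (1, x)a`. -/
def xFun : V → V
  | [] => []
  | false :: w => true :: w
  | true :: w => false :: xFun w

def xInvFun : V → V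
  | [] => []
  | true :: w => false :: w
  | false :: w => true :: xInvFun w

lemma x_left_inv : ∀ w, xInvFun (xFun w) = w
  | [] => rfl
  | false :: _ => rfl
  | true :: w => by simp [xFun, xInvFun, x_left_inv w]

lemma x_right_inv : ∀ w, xFun (xInvFun w) = w
  | [] => rfl
  | true :: _ => rfl
  | false :: w => by simp [xFun, xInvFun, x_right_inv w]

/-- The adding machine as a permutation of the tree. -/
def x : Equiv.Perm V := ⟨xFun, xInvFun, x_left_inv, x_right_inv⟩

/-- States of the Grigorchuk automaton (the nontrivial ones). -/
inductive St | b | c | d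
  deriving DecidableEq

def nextSt : St → St
  | .b => .c
  | .c => .d
  | .d => .b

def usesA : St → Bool
  | .b => true
  | .c => true
  | .d => false

/-- The action of the Grigorchuk generators `b = (a,c)`, `c = (a,d)`, `d = (1,b)`. -/
def gFun : St → V → V
  | _, [] => []
  | s, false :: w => false :: (if usesA s then aFun w else w)
  | s, true :: w => true :: gFun (nextSt s) w

lemma gFun_invol : ∀ (w : V) (s : St), gFun s (gFun s w) = w
  | [], _ => rfl
  | false :: w, s => by cases h : usesA s <;> simp [gFun, h, aFun_invol]
  | true :: w, s => by simp [gFun, gFun_invol w]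

def gPerm (s : St) : Equiv.Perm V :=
  ⟨gFun s, gFun s, fun w => gFun_invol w s, fun w => gFun_invol w s⟩

/-- The Grigorchuk generator `b = (a, c)`. -/
def b : Equiv.Perm V := gPerm .b
/-- The Grigorchuk generator `c = (a, d)`. -/
def c : Equiv.Perm V := gPerm .c
/-- The Grigorchuk generator `d = (1, b)`. -/
def d : Equiv.Perm V := gPerm .d

def pairFun (f g : V → V) : V → V
  | [] => []
  | false :: w => false :: f w
  | true :: w => true :: g w

/-- The automorphism `(f, g)` acting as `f` on the left subtree and as `g` on the
right subtree, fixing the first level. -/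
def pair (f g : Equiv.Perm V) : Equiv.Perm V where
  toFun := pairFun f g
  invFun := pairFun f.symm g.symm
  left_inv := by rintro (_ | ⟨i, w⟩) <;> first | rfl | cases i <;> simp [pairFun]
  right_inv := by rintro (_ | ⟨i, w⟩) <;> first | rfl | cases i <;> simp [pairFun]

/-- The commutator `[u, v] = u⁻¹v⁻¹uv` of the paper.  Words of tree automorphisms in the
paper are composed left-to-right, so the paper's word `u⁻¹v⁻¹uv` corresponds to the
permutation `v * u * v⁻¹ * u⁻¹` under the usual (right-to-left) composition of functions. -/
def pcomm (u v : Equiv.Perm V) : Equiv.Perm V := v * u * v⁻¹ * u⁻¹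

/-- The conjugate `v⁻¹ u v` of the paper (left-to-right composition). -/
def pconj (u v : Equiv.Perm V) : Equiv.Perm V := v * u * v⁻¹


lemma pair_mul (u v u' v' : Equiv.Perm V) :
    pair u v * pair u' v' = pair (u * u') (v * v') := by
  ext w; rcases w with _ | ⟨(_|_), w⟩ <;> rfl

lemma pair_inv (u v : Equiv.Perm V) : (pair u v)⁻¹ = pair u⁻¹ v⁻¹ := by
  ext w; rcases w with _ | ⟨(_|_), w⟩ <;> rfl

lemma a_conj (u v : Equiv.Perm V) : a * pair u v * a = pair v u := by
  ext w; rcases w with _ | ⟨(_|_), w⟩ <;> rfl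

lemma a_inv : a⁻¹ = a := by ext w; rfl

lemma a_sq : a * a = 1 := Equiv.ext aFun_invol

lemma b_inv : b⁻¹ = b := by ext w; rfl
lemma c_inv : c⁻¹ = c := by ext w; rfl
lemma d_inv : d⁻¹ = d := by ext w; rfl

lemma x_eq : x = a * pair 1 x := by
  ext w; rcases w with _ | ⟨(_|_), w⟩ <;> rfl

lemma b_eq : b = pair a c := by
  ext w; rcases w with _ | ⟨(_|_), w⟩ <;> rfl

lemma d_eq : d = pair 1 b := by
  ext w; rcases w with _ | ⟨(_|_), w⟩ <;> rfl

lemma step1 : pcomm x a = pair x⁻¹ x := by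
  unfold pcomm
  rw [a_inv]
  conv_lhs => rw [x_eq]
  rw [mul_inv_rev, pair_inv, inv_one, a_inv]
  simp only [← mul_assoc]
  rw [a_sq, one_mul, mul_assoc, mul_assoc, ← mul_assoc a, a_conj, pair_mul,
    one_mul, mul_one]

lemma step2 : pcomm (pair x⁻¹ x) d = pair 1 (pcomm x b) := by
  unfold pcomm
  rw [d_inv, d_eq, pair_inv, inv_inv, b_inv]
  simp only [pair_mul]
  congr 1
  group

lemma step3 (t : Equiv.Perm V) : pcomm (pair 1 t) b = pair 1 (pcomm t c) := by
  unfold pcomm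
  rw [b_inv, b_eq, pair_inv, inv_one, c_inv]
  simp only [pair_mul]
  congr 1
  rw [mul_one, mul_one, a_sq]

/-- The identity `[[[x, a], d], b] = (1, [[x, b], c])` of Lemma 2.3. -/
theorem commutator_x_a_d_b :
    pcomm (pcomm (pcomm x a) d) b = pair 1 (pcomm (pcomm x b) c) := by
  rw [step1, step2, step3]

end GrigTree
end

section
/- Let L = ⟨a,b,c,d,x⟩ with the Grigorchuk generators and the adding machine, K = ⟨[a,b]⟩^G the normal closure in G = ⟨a,b,c,d⟩, S = [⟨x⟩, G]^L, and R = K·S·γ₂(L) (normal closure in L). Then R contains the subgroup S × S of st_L(1) ≤ Aut(T₀)×Aut(T₁), i.e. (1,s) ∈ R and (s,1) ∈ R for every s ∈ S. -/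
namespace GrigTree

/-- The Grigorchuk group `G = ⟨a, b, c, d⟩`. -/
def G : Subgroup (Equiv.Perm V) := Subgroup.closure {a, b, c, d}

/-- The group `L = ⟨a, b, c, d, x⟩`. -/
def L : Subgroup (Equiv.Perm V) := Subgroup.closure {a, b, c, d, x}

/-- `K = ⟨[a,b]⟩^G`, the normal closure of `[a, b]` in `G`. -/
def K : Subgroup (Equiv.Perm V) :=
  Subgroup.closure {p | ∃ g ∈ G, p = pconj (pcomm a b) g}

/-- `S = [⟨x⟩, G]^L`, generated as a normal subgroup of `L` by
`[a,x], [b,x], [c,x], [d,x]`. -/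
def S : Subgroup (Equiv.Perm V) :=
  Subgroup.closure
    {p | ∃ l ∈ L, ∃ y ∈ ({a, b, c, d} : Set (Equiv.Perm V)), p = pconj (pcomm y x) l}

/-- `R = ⟨K, S, γ₂(L)⟩^L`, the normal closure in `L` of `K`, `S` and the commutator
subgroup `γ₂(L) = [L, L]`. -/
def R : Subgroup (Equiv.Perm V) :=
  Subgroup.closure
    {p | ∃ l ∈ L, ∃ r : Equiv.Perm V,
      (r ∈ K ∨ r ∈ S ∨ r ∈ ⁅L, L⁆) ∧ p = pconj r l}


lemma pair_one : pair 1 1 = (1 : Equiv.Perm V) := by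
  apply Equiv.ext
  rintro (_ | ⟨_|_, w⟩) <;> rfl

lemma a_pair (u v : Equiv.Perm V) : a * pair u v * a⁻¹ = pair v u := by
  rw [a_inv]
  apply Equiv.ext
  rintro (_ | ⟨_|_, w⟩) <;> rfl

lemma c_eq : c = pair a d := by
  apply Equiv.ext
  rintro (_ | ⟨_|_, w⟩) <;> rfl

lemma aba_eq : a * b * a⁻¹ = pair c a := by
  rw [a_inv]; apply Equiv.ext; rintro (_ | ⟨_|_, w⟩) <;> rfl

lemma x_sq : x * x = pair x x := by
  apply Equiv.ext; rintro (_ | ⟨_|_, w⟩) <;> rfl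

lemma a_mem_L : a ∈ L := Subgroup.subset_closure (by simp)
lemma b_mem_L : b ∈ L := Subgroup.subset_closure (by simp)
lemma c_mem_L : c ∈ L := Subgroup.subset_closure (by simp)
lemma d_mem_L : d ∈ L := Subgroup.subset_closure (by simp)
lemma x_mem_L : x ∈ L := Subgroup.subset_closure (by simp [x])

lemma pair_one_x_mem_L : pair 1 x ∈ L := by
  have h : pair 1 x = a⁻¹ * x := by
    conv_rhs => rw [x_eq]
    group
  rw [h]
  exact mul_mem (inv_mem a_mem_L) x_mem_L

/-- step 1: every element of `L` is the right section of some element of `st_L(1)`. -/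
lemma sections_onto : ∀ l ∈ L, ∃ v, pair v l ∈ L := by
  intro l hl
  induction hl using Subgroup.closure_induction with
  | mem g hg =>
      rcases hg with h | h | h | h | h
      · subst h
        exact ⟨c, by rw [← aba_eq]; exact mul_mem (mul_mem a_mem_L b_mem_L) (inv_mem a_mem_L)⟩
      · subst h; exact ⟨1, by rw [← d_eq]; exact d_mem_L⟩
      · subst h; exact ⟨a, by rw [← b_eq]; exact b_mem_L⟩
      · subst h; exact ⟨a, by rw [← c_eq]; exact c_mem_L⟩
      · rw [Set.mem_singleton_iff] at h; subst h
        exact ⟨x, by rw [← x_sq]; exact mul_mem x_mem_L x_mem_L⟩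
  | one => exact ⟨1, by rw [pair_one]; exact one_mem L⟩
  | mul g h _ _ ih1 ih2 =>
      obtain ⟨v, hv⟩ := ih1; obtain ⟨w, hw⟩ := ih2
      exact ⟨v * w, by rw [← pair_mul]; exact mul_mem hv hw⟩
  | inv g _ ih =>
      obtain ⟨v, hv⟩ := ih
      exact ⟨v⁻¹, by rw [← pair_inv]; exact inv_mem hv⟩


/-- `R` is normalized by `L`. -/
lemma R_conj {g r : Equiv.Perm V} (hg : g ∈ L) (hr : r ∈ R) : g * r * g⁻¹ ∈ R := by
  induction hr using Subgroup.closure_induction with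
  | mem t ht =>
      obtain ⟨l, hl, r', hr', rfl⟩ := ht
      refine Subgroup.subset_closure ⟨g * l, mul_mem hg hl, r', hr', ?_⟩
      simp only [pconj]; group
  | one => simpa using one_mem R
  | mul u v _ _ ih1 ih2 =>
      have h : g * (u * v) * g⁻¹ = (g * u * g⁻¹) * (g * v * g⁻¹) := by group
      rw [h]; exact mul_mem ih1 ih2
  | inv u _ ih =>
      have h : g * u⁻¹ * g⁻¹ = (g * u * g⁻¹)⁻¹ := by group
      rw [h]; exact inv_mem ih

lemma comm_mem_R {u w : Equiv.Perm V} (hw : w ∈ L) (hu : u ∈ L) :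
    w * u * w⁻¹ * u⁻¹ ∈ R :=
  Subgroup.subset_closure ⟨1, one_mem L, _,
    Or.inr (Or.inr (Subgroup.commutator_mem_commutator hw hu)), by simp [pconj, commutatorElement_def]⟩

/-- base case: `(1, [y,x]) ∈ R` whenever `y` is a right section of an element of `L`. -/
lemma base_case {v y : Equiv.Perm V} (hu : pair v y ∈ L) : pair 1 (pcomm y x) ∈ R := by
  have h : pair 1 (pcomm y x)
      = pair 1 x * pair v y * (pair 1 x)⁻¹ * (pair v y)⁻¹ := by
    rw [pair_inv, pair_inv, pair_mul, pair_mul, pair_mul]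
    simp [pcomm]
  rw [h]
  exact comm_mem_R pair_one_x_mem_L hu

theorem R_contains_S_times_S_aux :
    ∀ s : Equiv.Perm V, s ∈ S → pair s 1 ∈ R ∧ pair 1 s ∈ R := by
  have main : ∀ s ∈ S, pair 1 s ∈ R := by
    intro s hs
    induction hs using Subgroup.closure_induction with
    | mem p hp =>
        obtain ⟨l, hl, y, hy, rfl⟩ := hp
        obtain ⟨v, hv⟩ := sections_onto l hl
        have h1 : pair 1 (pcomm y x) ∈ R := by
          have haba : pair c a ∈ L := by
            rw [← aba_eq]; exact mul_mem (mul_mem a_mem_L b_mem_L) (inv_mem a_mem_L)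
          have hb' : pair 1 b ∈ L := by rw [← d_eq]; exact d_mem_L
          have hc' : pair a c ∈ L := by rw [← b_eq]; exact b_mem_L
          have hd' : pair a d ∈ L := by rw [← c_eq]; exact c_mem_L
          rcases hy with h | h | h | h
          · subst h; exact base_case haba
          · subst h; exact base_case hb'
          · subst h; exact base_case hc'
          · rw [Set.mem_singleton_iff] at h; subst h
            exact base_case hd'
        have h2 : pair 1 (pconj (pcomm y x) l)
            = pair v l * pair 1 (pcomm y x) * (pair v l)⁻¹ := by
          rw [pair_inv, pair_mul, pair_mul]
          simp [pconj]
        rw [h2]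
        exact R_conj hv h1
    | one => rw [pair_one]; exact one_mem R
    | mul u w _ _ ih1 ih2 => rw [← one_mul (1 : Equiv.Perm V), ← pair_mul]
                             exact mul_mem ih1 ih2
    | inv u _ ih =>
        have h : pair 1 u⁻¹ = (pair 1 u)⁻¹ := by rw [pair_inv, inv_one]
        rw [h]; exact inv_mem ih
  intro s hs
  have h1 : pair 1 s ∈ R := main s hs
  have h2 : pair s 1 ∈ R := by
    rw [← a_pair 1 s]
    exact R_conj a_mem_L h1
  exact ⟨h2, h1⟩


/-- Lemma 2.7 (last part): `R ⪰ S × S`, i.e. `R` contains `(s, 1)` and `(1, s)` for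
every `s ∈ S`. -/
theorem R_contains_S_times_S :
    ∀ s : Equiv.Perm V, s ∈ S → pair s 1 ∈ R ∧ pair 1 s ∈ R :=
  R_contains_S_times_S_aux

end GrigTree
end

section
/- The group L generated by the Grigorchuk generators a,b,c,d and the adding machine x has infinite abelianization; more precisely, the image of x in L/[L,L] has infinite order. -/
namespace GrigTree

/-! ### Auxiliary development: the `x`-exponent homomorphism -/

section ExpX

abbrev Ltr := Fin 5 × Bool

def gen : Fin 5 → Equiv.Perm V
  | ⟨0, _⟩ => a
  | ⟨1, _⟩ => b
  | ⟨2, _⟩ => c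
  | ⟨3, _⟩ => d
  | ⟨4, _⟩ => x

def evL (ℓ : Ltr) : Equiv.Perm V := cond ℓ.2 (gen ℓ.1) (gen ℓ.1)⁻¹

def ev (w : List Ltr) : Equiv.Perm V := (w.map evL).prod

def act : Fin 5 → Bool := fun i => i = 0 ∨ i = 4

def par (w : List Ltr) : Bool := w.foldr (fun ℓ p => Bool.xor (act ℓ.1) p) false

def lsec (j : Bool) (ℓ : Ltr) : List Ltr :=
  match ℓ, j with
  | (0, _), _ => []
  | (1, s), false => [(0, s)]
  | (1, s), true => [(2, s)]
  | (2, s), false => [(0, s)]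
  | (2, s), true => [(3, s)]
  | (3, _), false => []
  | (3, s), true => [(1, s)]
  | (4, true), false => []
  | (4, true), true => [(4, true)]
  | (4, false), false => [(4, false)]
  | (4, false), true => []

def sec (i : Bool) : List Ltr → List Ltr
  | [] => []
  | ℓ :: t => lsec (Bool.xor (par t) i) ℓ ++ sec i t

lemma ev_nil : ev [] = 1 := rfl
lemma ev_cons (ℓ : Ltr) (t : List Ltr) : ev (ℓ :: t) = evL ℓ * ev t := by
  simp [ev]
lemma ev_append (s t : List Ltr) : ev (s ++ t) = ev s * ev t := by
  simp [ev]

lemma evL_apply (ℓ : Ltr) (j : Bool) (v : V) :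
    evL ℓ (j :: v) = (Bool.xor (act ℓ.1) j) :: ev (lsec j ℓ) v := by
  obtain ⟨g, s⟩ := ℓ
  fin_cases g <;> cases s <;> cases j <;>
    simp [evL, gen, lsec, ev, act, a, b, c, d, x, gPerm, gFun, aFun, xFun, xInvFun,
      Equiv.Perm.inv_def, nextSt, usesA]

lemma master : ∀ (w : List Ltr) (i : Bool) (v : V),
    ev w (i :: v) = (Bool.xor (par w) i) :: ev (sec i w) v
  | [], i, v => by simp [ev, par, sec]
  | ℓ :: t, i, v => by
    rw [ev_cons, Equiv.Perm.mul_apply, master t i v, evL_apply]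
    show _ :: _ = (Bool.xor (par (ℓ :: t)) i) :: ev (lsec (Bool.xor (par t) i) ℓ ++ sec i t) v
    rw [ev_append, Equiv.Perm.mul_apply]
    congr 1
    show Bool.xor (act ℓ.1) (Bool.xor (par t) i) = Bool.xor (Bool.xor (act ℓ.1) (par t)) i
    rw [Bool.xor_assoc]


def eL (ℓ : Ltr) : ℤ := if ℓ.1 = 4 then (if ℓ.2 then 1 else -1) else 0
def Ee (w : List Ltr) : ℤ := (w.map eL).sum
def mL (ℓ : Ltr) : ℕ := if ℓ.1 = 0 then 0 else 1
def mm (w : List Ltr) : ℕ := (w.map mL).sum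

lemma Ee_append (s t : List Ltr) : Ee (s ++ t) = Ee s + Ee t := by simp [Ee]
lemma mm_append (s t : List Ltr) : mm (s ++ t) = mm s + mm t := by simp [mm]

lemma lsec_E (ℓ : Ltr) (p : Bool) : Ee (lsec p ℓ) + Ee (lsec (!p) ℓ) = eL ℓ := by
  obtain ⟨g, s⟩ := ℓ; fin_cases g <;> cases s <;> cases p <;> decide

lemma lsec_mm_le (ℓ : Ltr) (j : Bool) : mm (lsec j ℓ) ≤ mL ℓ := by
  obtain ⟨g, s⟩ := ℓ; fin_cases g <;> cases s <;> cases j <;> decide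

lemma lsec_len_le (ℓ : Ltr) (j : Bool) : (lsec j ℓ).length ≤ 1 := by
  obtain ⟨g, s⟩ := ℓ; fin_cases g <;> cases s <;> cases j <;> decide

lemma lsec_tie (ℓ : Ltr) (j : Bool) (h1 : (lsec j ℓ).length = 1) (h2 : mm (lsec j ℓ) = mL ℓ) :
    (ℓ.1 = 4 ∧ ℓ.2 = j) ∨ (act ℓ.1 = false ∧ eL ℓ = 0) := by
  obtain ⟨g, s⟩ := ℓ; fin_cases g <;> cases s <;> cases j <;> revert h1 h2 <;> decide

lemma E_split : ∀ w : List Ltr, Ee (sec false w) + Ee (sec true w) = Ee w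
  | [] => rfl
  | ℓ :: t => by
    have h := lsec_E ℓ (par t)
    have ih := E_split t
    simp only [sec, Ee_append]
    show Ee (lsec (Bool.xor (par t) false) ℓ) + Ee (sec false t) +
      (Ee (lsec (Bool.xor (par t) true) ℓ) + Ee (sec true t)) = Ee (ℓ :: t)
    rw [Bool.xor_false, Bool.xor_true]
    have : Ee (ℓ :: t) = eL ℓ + Ee t := by simp [Ee]
    rw [this]; omega

lemma mm_sec_le (i : Bool) : ∀ w : List Ltr, mm (sec i w) ≤ mm w
  | [] => le_refl _
  | ℓ :: t => by
    have h := lsec_mm_le ℓ (Bool.xor (par t) i)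
    have ih := mm_sec_le i t
    simp only [sec, mm_append]
    have : mm (ℓ :: t) = mL ℓ + mm t := by simp [mm]
    omega

lemma len_sec_le (i : Bool) : ∀ w : List Ltr, (sec i w).length ≤ w.length
  | [] => le_refl _
  | ℓ :: t => by
    have h := lsec_len_le ℓ (Bool.xor (par t) i)
    have ih := len_sec_le i t
    simp only [sec, List.length_append, List.length_cons]
    omega

lemma par_cons (ℓ : Ltr) (t : List Ltr) : par (ℓ :: t) = Bool.xor (act ℓ.1) (par t) := rfl

lemma tieC (i : Bool) : ∀ w : List Ltr, mm (sec i w) = mm w → (sec i w).length = w.length →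
    Ee w = if par w then (if i then (1:ℤ) else -1) else 0
  | [] => by intro _ _; simp [Ee, par]
  | ℓ :: t => by
    intro hm hl
    have hm1 := lsec_mm_le ℓ (Bool.xor (par t) i)
    have hm2 := mm_sec_le i t
    have hl1 := lsec_len_le ℓ (Bool.xor (par t) i)
    have hl2 := len_sec_le i t
    rw [show sec i (ℓ :: t) = lsec (Bool.xor (par t) i) ℓ ++ sec i t from rfl, mm_append,
      show mm (ℓ :: t) = mL ℓ + mm t from by simp [mm]] at hm
    rw [show sec i (ℓ :: t) = lsec (Bool.xor (par t) i) ℓ ++ sec i t from rfl,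
      List.length_append, List.length_cons] at hl
    have hmt : mm (sec i t) = mm t := by omega
    have hlt : (sec i t).length = t.length := by omega
    have hmE : mm (lsec (Bool.xor (par t) i) ℓ) = mL ℓ := by omega
    have hlE : (lsec (Bool.xor (par t) i) ℓ).length = 1 := by omega
    have IH := tieC i t hmt hlt
    have hEe : Ee (ℓ :: t) = eL ℓ + Ee t := by simp [Ee]
    rcases lsec_tie ℓ (Bool.xor (par t) i) hlE hmE with ⟨h4, hsj⟩ | ⟨hact, he0⟩
    · obtain ⟨g, s⟩ := ℓ
      simp only at h4 hsj
      subst h4 hsj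
      have hactx : act (4 : Fin 5) = true := rfl
      rw [hEe, IH, par_cons]
      simp only [hactx]
      cases hp : par t <;> cases i <;> simp [eL]
    · rw [hEe, he0, IH, par_cons, hact]
      simp


lemma core : ∀ (n : ℕ) (w : List Ltr), mm w + w.length ≤ n → ev w = 1 → Ee w = 0 := by
  intro n
  induction n with
  | zero =>
    intro w hle _
    have : w = [] := List.length_eq_zero_iff.mp (by omega)
    subst this; rfl
  | succ n IH =>
    intro w hle hw
    have hpar : par w = false := by
      have h := master w false []
      rw [hw, Equiv.Perm.one_apply] at h
      injection h with h1 _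
      simpa using h1.symm
    have hsec : ∀ i, ev (sec i w) = 1 := by
      intro i
      apply Equiv.ext
      intro v
      have h := master w i v
      rw [hw, Equiv.Perm.one_apply, hpar, Bool.false_xor] at h
      injection h with _ h2
      rw [Equiv.Perm.one_apply]
      exact h2.symm
    by_cases h0 : mm (sec false w) = mm w ∧ (sec false w).length = w.length
    · rw [tieC false w h0.1 h0.2, hpar]; rfl
    by_cases h1 : mm (sec true w) = mm w ∧ (sec true w).length = w.length
    · rw [tieC true w h1.1 h1.2, hpar]; rfl
    · have m0 := mm_sec_le false w
      have m1 := mm_sec_le true w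
      have l0 := len_sec_le false w
      have l1 := len_sec_le true w
      have e0 := IH (sec false w) (by omega) (hsec false)
      have e1 := IH (sec true w) (by omega) (hsec true)
      have := E_split w
      omega

/-- The evaluation homomorphism from the free group on five letters. -/
def piHat : FreeGroup (Fin 5) →* Equiv.Perm V := FreeGroup.lift gen

/-- The `x`-exponent homomorphism. -/
def eHat : FreeGroup (Fin 5) →* Multiplicative ℤ :=
  FreeGroup.lift fun i => Multiplicative.ofAdd (if i = 4 then 1 else 0)

lemma piHat_mk (w : List Ltr) : piHat (FreeGroup.mk w) = ev w := by
  rw [piHat, FreeGroup.lift_mk]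
  rfl

lemma eHat_mk (w : List Ltr) : eHat (FreeGroup.mk w) = Multiplicative.ofAdd (Ee w) := by
  have hfun : ∀ ℓ : Ltr, (cond ℓ.2 (Multiplicative.ofAdd (if ℓ.1 = 4 then (1:ℤ) else 0))
      (Multiplicative.ofAdd (if ℓ.1 = 4 then (1:ℤ) else 0))⁻¹) = Multiplicative.ofAdd (eL ℓ) := by
    rintro ⟨g, s⟩
    cases s <;> by_cases hg : g = 4 <;> simp [eL, hg, ← ofAdd_neg]
  rw [eHat, FreeGroup.lift_mk]
  induction w with
  | nil => rfl
  | cons ℓ t ih =>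
    rw [List.map_cons, List.prod_cons, ih, hfun ℓ, ← ofAdd_add]
    simp [Ee]

lemma ker_le : piHat.ker ≤ eHat.ker := by
  intro g hg
  rw [MonoidHom.mem_ker] at hg ⊢
  rw [← FreeGroup.mk_toWord (x := g)] at hg ⊢
  rw [piHat_mk] at hg
  rw [eHat_mk, core (mm g.toWord + g.toWord.length) g.toWord le_rfl hg]
  rfl

lemma range_eq : piHat.range = L := by
  rw [piHat, FreeGroup.range_lift_eq_closure, L]
  congr 1
  ext g
  constructor
  · rintro ⟨i, rfl⟩
    fin_cases i <;> simp [gen, Set.mem_insert_iff]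
  · intro hg
    simp only [Set.mem_insert_iff, Set.mem_singleton_iff] at hg
    rcases hg with rfl | rfl | rfl | rfl | rfl
    exacts [⟨0, rfl⟩, ⟨1, rfl⟩, ⟨2, rfl⟩, ⟨3, rfl⟩, ⟨4, rfl⟩]

noncomputable def qHom : FreeGroup (Fin 5) ⧸ piHat.ker →* Multiplicative ℤ :=
  QuotientGroup.lift piHat.ker eHat ker_le

noncomputable def chi0 : piHat.range →* Multiplicative ℤ :=
  qHom.comp (QuotientGroup.quotientKerEquivRange piHat).symm.toMonoidHom

lemma chi0_spec (g : FreeGroup (Fin 5)) (y : piHat.range) (hy : (y : Equiv.Perm V) = piHat g) :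
    chi0 y = eHat g := by
  have h1 : (QuotientGroup.quotientKerEquivRange piHat) (QuotientGroup.mk g) = y := by
    apply Subtype.ext
    rw [hy]
    rfl
  have h2 : (QuotientGroup.quotientKerEquivRange piHat).symm y = QuotientGroup.mk g := by
    rw [← h1, MulEquiv.symm_apply_apply]
  rw [chi0, MonoidHom.comp_apply, MulEquiv.coe_toMonoidHom, h2]
  exact QuotientGroup.lift_mk' _ _ g

def inc : L →* piHat.range where
  toFun y := ⟨y.1, by rw [range_eq]; exact y.2⟩
  map_one' := rfl
  map_mul' _ _ := rfl

noncomputable def chi : L →* Multiplicative ℤ := chi0.comp inc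

lemma chi_x (hx : x ∈ L) : chi ⟨x, hx⟩ = Multiplicative.ofAdd 1 := by
  rw [chi, MonoidHom.comp_apply]
  have := chi0_spec (FreeGroup.of 4) (inc ⟨x, hx⟩) (by simp [inc, piHat, gen]; rfl)
  rw [this, eHat]
  rw [FreeGroup.lift_apply_of]
  norm_num

theorem L_abelianization_infinite' (hx : x ∈ L) :
    Infinite (Abelianization L) ∧
      ¬ IsOfFinOrder (Abelianization.of (⟨x, hx⟩ : L)) := by
  have key : ¬ IsOfFinOrder (Abelianization.of (⟨x, hx⟩ : L)) := by
    intro h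
    have h2 := (Abelianization.lift chi).isOfFinOrder h
    rw [Abelianization.lift_apply_of, chi_x] at h2
    obtain ⟨m, hm, hpow⟩ := isOfFinOrder_iff_pow_eq_one.mp h2
    have : (m : ℤ) • (1 : ℤ) = 0 := by
      have := congrArg Multiplicative.toAdd hpow
      simpa using this
    simp at this
    omega
  refine ⟨?_, key⟩
  by_contra hfin
  rw [not_infinite_iff_finite] at hfin
  haveI := hfin
  exact key (isOfFinOrder_of_finite _)


end ExpX

/-- The abelianization `L / [L, L]` is infinite; more precisely the image of the
adding machine `x` in the abelianization has infinite order. -/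
theorem L_abelianization_infinite (hx : x ∈ L) :
    Infinite (Abelianization L) ∧
      ¬ IsOfFinOrder (Abelianization.of (⟨x, hx⟩ : L)) :=
  L_abelianization_infinite' hx

end GrigTree
end

section
/- Let L = ⟨a,b,c,d,x⟩ as above, and define b̃ = x⁻¹bx, c̃ = x⁻¹cx, d̃ = x⁻¹dx. Then b̃, c̃, d̃ are involutions satisfying the wreath recursions b̃ = (c̃, a), c̃ = (d̃, a), d̃ = (b̃, 1); consequently ⟨a, b̃, c̃, d̃⟩ is isomorphic to the Grigorchuk group G = ⟨a,b,c,d⟩. -/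
namespace GrigTree

/-- `b̃ = x⁻¹ b x` (the paper's conjugate, composed left-to-right). -/
def btil : Equiv.Perm V := pconj b x
/-- `c̃ = x⁻¹ c x`. -/
def ctil : Equiv.Perm V := pconj c x
/-- `d̃ = x⁻¹ d x`. -/
def dtil : Equiv.Perm V := pconj d x

/-! ### Auxiliary lemmas -/

lemma gPerm_sq (s : St) : gPerm s * gPerm s = 1 :=
  Equiv.ext fun w => gFun_invol w s

lemma til_sq (s : St) : pconj (gPerm s) x ^ 2 = 1 := by
  have h := gPerm_sq s
  have e : pconj (gPerm s) x ^ 2 = x * (gPerm s * gPerm s) * x⁻¹ := by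
    rw [pconj, sq]; simp [mul_assoc]
  rw [e, h, mul_one, mul_inv_cancel]

/-- The mirror function reflecting the tree at every level. -/
def mFun : V → V := List.map not

lemma mFun_invol : ∀ w, mFun (mFun w) = w
  | [] => rfl
  | i :: t => by
      show (!!i) :: mFun (mFun t) = i :: t
      rw [mFun_invol t, Bool.not_not]

/-- The mirror automorphism of the tree. -/
def m : Equiv.Perm V := ⟨mFun, mFun, mFun_invol, mFun_invol⟩

lemma m_inv : m⁻¹ = m := Equiv.ext fun _ => rfl

lemma aFun_mirror : ∀ w, aFun (mFun w) = mFun (aFun w)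
  | [] => rfl
  | i :: w => by simp [aFun, mFun]

/-- The conjugated generators are the mirror images of the original generators. -/
lemma key : ∀ (w : V) (s : St), xFun (gFun s (xInvFun w)) = mFun (gFun s (mFun w))
  | [], _ => rfl
  | false :: u, s => congrArg (List.cons false) (key u (nextSt s))
  | true :: u, s => by
      show true :: (if usesA s then aFun u else u)
        = true :: mFun (if usesA s then aFun (mFun u) else mFun u)
      cases h : usesA s <;> simp only [h, if_true, if_false, Bool.false_eq_true, ite_false, ite_true]
      · rw [mFun_invol]
      · rw [aFun_mirror, mFun_invol]

lemma conj_a : m * a * m⁻¹ = a := by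
  rw [m_inv]
  refine Equiv.ext fun w => ?_
  show mFun (aFun (mFun w)) = aFun w
  rw [aFun_mirror, mFun_invol]

lemma conj_g (s : St) : m * gPerm s * m⁻¹ = pconj (gPerm s) x := by
  rw [m_inv]
  refine Equiv.ext fun w => ?_
  show mFun (gFun s (mFun w)) = xFun (gFun s (xInvFun w))
  exact (key w s).symm

lemma conj_b : m * b * m⁻¹ = btil := conj_g .b
lemma conj_c : m * c * m⁻¹ = ctil := conj_g .c
lemma conj_d : m * d * m⁻¹ = dtil := conj_g .d

/-- `b̃, c̃, d̃` are involutions satisfying the wreath recursions `b̃ = (c̃, a)`,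
`c̃ = (d̃, a)`, `d̃ = (b̃, 1)`; consequently `⟨a, b̃, c̃, d̃⟩` is isomorphic to the
Grigorchuk group `G = ⟨a, b, c, d⟩`. -/
theorem conjugated_generators_give_grigorchuk :
    btil ^ 2 = 1 ∧ ctil ^ 2 = 1 ∧ dtil ^ 2 = 1 ∧
      btil = pair ctil a ∧ ctil = pair dtil a ∧ dtil = pair btil 1 ∧
      Nonempty
        ((Subgroup.closure {a, btil, ctil, dtil} : Subgroup (Equiv.Perm V)) ≃*
          (Subgroup.closure {a, b, c, d} : Subgroup (Equiv.Perm V))) := by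
  refine ⟨til_sq .b, til_sq .c, til_sq .d, ?_, ?_, ?_, ?_⟩
  · exact Equiv.ext fun w => by rcases w with _ | ⟨_ | _, u⟩ <;> rfl
  · exact Equiv.ext fun w => by rcases w with _ | ⟨_ | _, u⟩ <;> rfl
  · exact Equiv.ext fun w => by rcases w with _ | ⟨_ | _, u⟩ <;> rfl
  · have himg : (⇑(MulAut.conj m)) '' {a, b, c, d} = {a, btil, ctil, dtil} := by
      simp only [Set.image_insert_eq, Set.image_singleton, MulAut.conj_apply]
      rw [conj_a, conj_b, conj_c, conj_d]
    have h1 : Subgroup.closure {a, btil, ctil, dtil} =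
        (Subgroup.closure {a, b, c, d}).map (MulAut.conj m).toMonoidHom := by
      rw [MonoidHom.map_closure]
      congr 1
      exact himg.symm
    exact ⟨(MulEquiv.subgroupCongr h1).trans
      (MulEquiv.subgroupMap (MulAut.conj m) _).symm⟩

end GrigTree
end

section
/- Let G be a level-transitive branch group acting on a rooted tree and N a nontrivial normal subgroup of G. Then the quotient G/N is virtually abelian. -/
/-- The vertices at level `n` of the spherically homogeneous rooted tree with
branching index `m` : a vertex is a sequence choosing one of `m i` children at each
level `i < n`. -/
def Vtx (m : ℕ → ℕ) (n : ℕ) : Type := ∀ i : Fin n, Fin (m i)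

/-- The parent (truncation) map from level `n + 1` to level `n`. -/
def trunc (m : ℕ → ℕ) {n : ℕ} (v : Vtx m (n + 1)) : Vtx m n := fun i => v i.castSucc

/-- The automorphism group of the spherically homogeneous rooted tree `T_m`: families
of permutations of the levels commuting with the parent maps. -/
def treeAutGroup (m : ℕ → ℕ) : Subgroup (∀ n, Equiv.Perm (Vtx m n)) where
  carrier := {σ | ∀ (n : ℕ) (v : Vtx m (n + 1)), trunc m (σ (n + 1) v) = σ n (trunc m v)}
  one_mem' := fun _ _ => rfl
  mul_mem' := by
    intro p q hp hq n v
    show trunc m (p (n + 1) (q (n + 1) v)) = p n (q n (trunc m v))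
    rw [hp, hq]
  inv_mem' := by
    intro p hp n v
    show trunc m ((p (n + 1))⁻¹ v) = (p n)⁻¹ (trunc m v)
    have h := hp n ((p (n + 1))⁻¹ v)
    rw [show (p (n + 1)) ((p (n + 1))⁻¹ v) = v from Equiv.apply_symm_apply _ _] at h
    rw [h]
    exact (Equiv.symm_apply_apply _ _).symm

variable (m : ℕ → ℕ) {Γ : Type*} [Group Γ] (φ : Γ →* ↥(treeAutGroup m))

/-- `w` is a descendant of `v` (i.e. lies in the subtree `T_v`). -/
def IsBelow {k n : ℕ} (v : Vtx m k) (w : Vtx m n) : Prop :=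
  ∃ h : k ≤ n, ∀ i : Fin k, w (Fin.castLE h i) = v i

/-- The rigid stabilizer of a vertex `v`: the elements of `Γ` acting trivially outside
the subtree `T_v`. -/
def rist {k : ℕ} (v : Vtx m k) : Subgroup Γ where
  carrier := {g | ∀ (n : ℕ) (w : Vtx m n), ¬ IsBelow m v w → (φ g).1 n w = w}
  one_mem' := by intro n w _; rw [map_one]; rfl
  mul_mem' := by
    intro g h hg hh n w hw
    rw [map_mul]
    show (φ g).1 n ((φ h).1 n w) = w
    rw [hh n w hw, hg n w hw]
  inv_mem' := by
    intro g hg n w hw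
    rw [map_inv]
    show ((φ g).1 n)⁻¹ w = w
    conv_lhs => rw [← hg n w hw]
    exact Equiv.symm_apply_apply _ _

/-- The rigid stabilizer of the `n`-th level: the subgroup generated by the rigid
stabilizers of the vertices of level `n`. -/
def ristLevel (n : ℕ) : Subgroup Γ := ⨆ v : Vtx m n, rist m φ v

namespace BranchAux

/-- Restriction of a level-`n` vertex to its level-`k` ancestor. -/
def res {k n : ℕ} (m : ℕ → ℕ) (h : k ≤ n) (w : Vtx m n) : Vtx m k :=
  fun i => w (Fin.castLE h i)

lemma res_self {k : ℕ} (w : Vtx m k) : res m le_rfl w = w := by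
  funext i
  show w (Fin.castLE le_rfl i) = w i
  congr 1

lemma res_trunc {k n : ℕ} (h : k ≤ n) (w : Vtx m (n + 1)) :
    res m (h.trans (Nat.le_succ n)) w = res m h (trunc m w) := rfl

lemma res_comm (σ : ∀ n, Equiv.Perm (Vtx m n)) (hσ : σ ∈ treeAutGroup m)
    {k n : ℕ} (h : k ≤ n) (w : Vtx m n) :
    res m h (σ n w) = σ k (res m h w) := by
  induction n, h using Nat.le_induction with
  | base => simp only [res_self]
  | succ n h ih =>
    have h1 : res m (h.trans (Nat.le_succ n)) (σ (n+1) w)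
        = res m h (trunc m (σ (n+1) w)) := res_trunc m h _
    have h2 : res m (h.trans (Nat.le_succ n)) w = res m h (trunc m w) := res_trunc m h _
    have : (h.trans (Nat.le_succ n)) = Nat.le_succ_of_le h := rfl
    calc res m (Nat.le_succ_of_le h) (σ (n+1) w)
        = res m h (trunc m (σ (n+1) w)) := rfl
      _ = res m h (σ n (trunc m w)) := by rw [hσ n w]
      _ = σ k (res m h (trunc m w)) := ih _
      _ = σ k (res m (Nat.le_succ_of_le h) w) := rfl

lemma isBelow_iff_res {k n : ℕ} (v : Vtx m k) (w : Vtx m n) :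
    IsBelow m v w ↔ ∃ h : k ≤ n, res m h w = v := by
  constructor
  · rintro ⟨h, hw⟩; exact ⟨h, funext hw⟩
  · rintro ⟨h, hw⟩; exact ⟨h, fun i => congrFun hw i⟩

lemma isBelow_map (σ : ∀ n, Equiv.Perm (Vtx m n)) (hσ : σ ∈ treeAutGroup m)
    {k n : ℕ} {v : Vtx m k} {w : Vtx m n} (hb : IsBelow m v w) :
    IsBelow m (σ k v) (σ n w) := by
  rw [isBelow_iff_res] at hb ⊢
  obtain ⟨h, hw⟩ := hb
  exact ⟨h, by rw [res_comm m σ hσ h w, hw]⟩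

lemma isBelow_same_level {k : ℕ} {v w : Vtx m k} (hb : IsBelow m v w) : w = v := by
  rw [isBelow_iff_res] at hb
  obtain ⟨h, hw⟩ := hb
  rw [← hw, res_self]

lemma isBelow_unique {k n : ℕ} {v u : Vtx m k} {w : Vtx m n}
    (h1 : IsBelow m v w) (h2 : IsBelow m u w) : v = u := by
  rw [isBelow_iff_res] at h1 h2
  obtain ⟨h, hw⟩ := h1
  obtain ⟨h', hw'⟩ := h2
  rw [← hw, ← hw']

lemma phi_mul (g h : Γ) (n : ℕ) (w : Vtx m n) :
    (φ (g * h)).1 n w = (φ g).1 n ((φ h).1 n w) := by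
  rw [map_mul]; rfl

lemma phi_inv (g : Γ) (n : ℕ) (w : Vtx m n) :
    (φ g⁻¹).1 n w = ((φ g).1 n)⁻¹ w := by
  rw [map_inv]; rfl

/-- An element of the rigid stabilizer of `v` fixes `v`. -/
lemma rist_fix {k : ℕ} {v : Vtx m k} {b : Γ} (hb : b ∈ rist m φ v) :
    (φ b).1 k v = v := by
  by_contra hne
  have h1 : (φ b).1 k ((φ b).1 k v) = (φ b).1 k v := by
    apply hb k
    intro hbel
    exact hne (isBelow_same_level m hbel)
  exact hne (((φ b).1 k).injective h1)

/-- Conjugation moves rigid stabilizers along the action. -/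
lemma conj_mem_rist {k : ℕ} {v : Vtx m k} {b : Γ} (hb : b ∈ rist m φ v) (g : Γ) :
    g * b * g⁻¹ ∈ rist m φ ((φ g).1 k v) := by
  intro n w hw
  rw [phi_mul, phi_mul, phi_inv]
  have hnb : ¬ IsBelow m v (((φ g).1 n)⁻¹ w) := by
    intro hbel
    apply hw
    have := isBelow_map m ((φ g) : ∀ n, Equiv.Perm (Vtx m n)) (φ g).2 hbel
    rwa [Equiv.Perm.inv_def, Equiv.apply_symm_apply] at this
  rw [hb n _ hnb, Equiv.Perm.inv_def, Equiv.apply_symm_apply]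

lemma isBelow_apply {k n : ℕ} {v : Vtx m k} {w : Vtx m n} {a : Γ}
    (ha : a ∈ rist m φ v) (hb : IsBelow m v w) : IsBelow m v ((φ a).1 n w) := by
  have := isBelow_map m ((φ a) : ∀ n, Equiv.Perm (Vtx m n)) (φ a).2 hb
  rwa [rist_fix m φ ha] at this

/-- Rigid stabilizers of distinct vertices at the same level commute elementwise. -/
lemma rist_commute (hfaithful : Function.Injective φ) {k : ℕ} {v u : Vtx m k}
    (hvu : v ≠ u) {a c : Γ} (ha : a ∈ rist m φ v) (hc : c ∈ rist m φ u) :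
    a * c = c * a := by
  apply hfaithful
  apply Subtype.ext
  funext n
  apply Equiv.ext
  intro w
  show (φ (a * c)).1 n w = (φ (c * a)).1 n w
  rw [phi_mul, phi_mul]
  by_cases h1 : IsBelow m v w
  · have h2 : ¬ IsBelow m u w := fun h2 => hvu (isBelow_unique m h1 h2)
    have h3 : ¬ IsBelow m u ((φ a).1 n w) :=
      fun h3 => hvu (isBelow_unique m (isBelow_apply m φ ha h1) h3)
    rw [hc n w h2, hc n _ h3]
  · by_cases h2 : IsBelow m u w
    · have h3 : ¬ IsBelow m v ((φ c).1 n w) :=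
        fun h3 => hvu (isBelow_unique m h3 (isBelow_apply m φ hc h2))
      rw [ha n w h1, ha n _ h3]
    · rw [hc n w h2, ha n w h1, hc n w h2]



/-- Grigorchuk's key lemma: if `g ∈ N` moves the level-`k` vertex `v`, then all
commutators of elements of `rist v` lie in `N`. -/
lemma commutator_rist_mem (hfaithful : Function.Injective φ)
    (N : Subgroup Γ) [N.Normal] {g : Γ} (hgN : g ∈ N) {k : ℕ} {v : Vtx m k}
    (hg : (φ g).1 k v ≠ v) {a b : Γ} (ha : a ∈ rist m φ v) (hb : b ∈ rist m φ v) :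
    a * b⁻¹ * a⁻¹ * b ∈ N := by
  have hvu : v ≠ (φ g).1 k v := fun h => hg h.symm
  have hc : g * b * g⁻¹ ∈ rist m φ ((φ g).1 k v) := conj_mem_rist m φ hb g
  have hx : (g * b * g⁻¹) * b⁻¹ ∈ N := by
    have h1 : b * g⁻¹ * b⁻¹ ∈ N := ‹N.Normal›.conj_mem g⁻¹ (inv_mem hgN) b
    have h2 : (g * b * g⁻¹) * b⁻¹ = g * (b * g⁻¹ * b⁻¹) := by group
    rw [h2]
    exact mul_mem hgN h1
  have hy : a * ((g * b * g⁻¹) * b⁻¹) * a⁻¹ * ((g * b * g⁻¹) * b⁻¹)⁻¹ ∈ N :=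
    mul_mem (‹N.Normal›.conj_mem _ hx a) (inv_mem hx)
  have hd : a * b⁻¹ * a⁻¹ * b ∈ rist m φ v :=
    mul_mem (mul_mem (mul_mem ha (inv_mem hb)) (inv_mem ha)) hb
  have hac : a * (g * b * g⁻¹) = (g * b * g⁻¹) * a := rist_commute m φ hfaithful hvu ha hc
  have hdc : (a * b⁻¹ * a⁻¹ * b) * (g * b * g⁻¹) = (g * b * g⁻¹) * (a * b⁻¹ * a⁻¹ * b) :=
    rist_commute m φ hfaithful hvu hd hc
  have key : a * ((g * b * g⁻¹) * b⁻¹) * a⁻¹ * ((g * b * g⁻¹) * b⁻¹)⁻¹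
      = a * b⁻¹ * a⁻¹ * b := by
    have e1 : a * ((g * b * g⁻¹) * b⁻¹) * a⁻¹ * ((g * b * g⁻¹) * b⁻¹)⁻¹
        = (g * b * g⁻¹) * (a * b⁻¹ * a⁻¹ * b) * (g * b * g⁻¹)⁻¹ := by
      rw [show a * ((g * b * g⁻¹) * b⁻¹) = (a * (g * b * g⁻¹)) * b⁻¹ by group, hac]
      group
    rw [e1, ← hdc]
    group
  exact key ▸ hy

/-- Transported version: commutators of any level-`k` rigid vertex stabilizer lie in `N`. -/
lemma commutator_rist_mem_all (hfaithful : Function.Injective φ)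
    (htrans : ∀ (n : ℕ) (v w : Vtx m n), ∃ g : Γ, (φ g).1 n v = w)
    (N : Subgroup Γ) [N.Normal] {g : Γ} (hgN : g ∈ N) {k : ℕ} {v : Vtx m k}
    (hg : (φ g).1 k v ≠ v) (w : Vtx m k) {a b : Γ}
    (ha : a ∈ rist m φ w) (hb : b ∈ rist m φ w) :
    a * b⁻¹ * a⁻¹ * b ∈ N := by
  obtain ⟨t, ht⟩ := htrans k v w
  have hvw : ((φ t⁻¹).1 k) w = v := by
    rw [phi_inv, ← ht, Equiv.Perm.inv_def, Equiv.symm_apply_apply]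
  have ha' : t⁻¹ * a * t ∈ rist m φ v := by
    have := conj_mem_rist m φ ha t⁻¹
    rwa [inv_inv, hvw] at this
  have hb' : t⁻¹ * b * t ∈ rist m φ v := by
    have := conj_mem_rist m φ hb t⁻¹
    rwa [inv_inv, hvw] at this
  have key := commutator_rist_mem m φ hfaithful N hgN hg ha' hb'
  have e1 : (t⁻¹ * a * t) * (t⁻¹ * b * t)⁻¹ * (t⁻¹ * a * t)⁻¹ * (t⁻¹ * b * t)
      = t⁻¹ * (a * b⁻¹ * a⁻¹ * b) * t := by group
  rw [e1] at key
  have := ‹N.Normal›.conj_mem _ key t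
  have e2 : t * (t⁻¹ * (a * b⁻¹ * a⁻¹ * b) * t) * t⁻¹ = a * b⁻¹ * a⁻¹ * b := by group
  rwa [e2] at this

end BranchAux

/-- If `G` is a (geometrically) branch group — i.e. `G` acts faithfully and level
transitively on a spherically homogeneous rooted tree with all rigid level stabilizers
of finite index — then every proper quotient `G ⧸ N` by a nontrivial normal subgroup
`N` is virtually abelian. -/
theorem branch_quotient_virtually_abelian
    (hm : ∀ n, 2 ≤ m n)
    (hfaithful : Function.Injective φ)
    (htrans : ∀ (n : ℕ) (v w : Vtx m n), ∃ g : Γ, (φ g).1 n v = w)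
    (hfi : ∀ n : ℕ, (ristLevel m φ n).FiniteIndex)
    (N : Subgroup Γ) [N.Normal] (hN : N ≠ ⊥) :
    ∃ H : Subgroup (Γ ⧸ N), H.FiniteIndex ∧ ∀ a ∈ H, ∀ b ∈ H, a * b = b * a := by
  classical
  open BranchAux in
  -- find a nontrivial element of N and a vertex it moves
  obtain ⟨g, hgN, hg1⟩ : ∃ g ∈ N, g ≠ 1 := by
    obtain ⟨⟨g, hgN⟩, hg1⟩ := Subgroup.ne_bot_iff_exists_ne_one.mp hN
    exact ⟨g, hgN, by simpa using hg1⟩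
  have hφg : φ g ≠ 1 := fun h => hg1 (hfaithful (h.trans (map_one φ).symm))
  obtain ⟨k, v, hgv⟩ : ∃ (k : ℕ) (v : Vtx m k), (φ g).1 k v ≠ v := by
    by_contra h
    push_neg at h
    apply hφg
    apply Subtype.ext
    funext n
    exact Equiv.ext fun w => h n w
  -- the image of the level-k rigid stabilizer
  set f := QuotientGroup.mk' N with hf
  refine ⟨(ristLevel m φ k).map f, ?_, ?_⟩
  · constructor
    have hdvd := Subgroup.index_map_dvd (ristLevel m φ k) (QuotientGroup.mk'_surjective N)
    intro h0
    rw [h0] at hdvd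
    exact (hfi k).index_ne_zero (zero_dvd_iff.mp hdvd)
  · -- commutativity
    have hcomm : ∀ x ∈ ristLevel m φ k, ∀ y ∈ ristLevel m φ k, f x * f y = f y * f x := by
      intro x hx y hy
      have hsub : ristLevel m φ k ≤
          Subgroup.comap f (Subgroup.centralizer {z | ∃ c ∈ ristLevel m φ k, f c = z}) := by
        apply iSup_le
        intro w a ha
        simp only [Subgroup.mem_comap]
        rw [Subgroup.mem_centralizer_iff]
        rintro z ⟨c, hc, rfl⟩
        have hc2 : c ∈ Subgroup.comap f (Subgroup.centralizer {f a}) := by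
          revert c
          have : ristLevel m φ k ≤ Subgroup.comap f (Subgroup.centralizer {f a}) := by
            apply iSup_le
            intro w' b hb
            simp only [Subgroup.mem_comap]
            rw [Subgroup.mem_centralizer_iff]
            rintro z hz
            rw [Set.mem_singleton_iff] at hz
            subst hz
            by_cases hww : w = w'
            · subst hww
              have key := commutator_rist_mem_all m φ hfaithful htrans N hgN hgv w
                (inv_mem hb) (inv_mem ha)
              rw [inv_inv, inv_inv] at key
              -- key : b⁻¹ * a * b * a⁻¹ ∈ N
              have : f (b⁻¹ * a * b * a⁻¹) = 1 := (QuotientGroup.eq_one_iff _).mpr key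
              have h2 : f b⁻¹ * f a * f b * f a⁻¹ = 1 := by
                simpa [map_mul] using this
              calc f a * f b = f b * (f b⁻¹ * f a * f b * f a⁻¹) * f a := by
                    simp [map_inv]; group
                _ = f b * f a := by rw [h2]; group
            · have : b * a = a * b := rist_commute m φ hfaithful (Ne.symm hww) hb ha
              calc f a * f b = f (a * b) := (map_mul f a b).symm
                _ = f (b * a) := by rw [this]
                _ = f b * f a := map_mul f b a
          exact fun c hc => this hc
        have := hc2
        simp only [Subgroup.mem_comap] at this
        rw [Subgroup.mem_centralizer_iff] at this
        exact (this (f a) rfl).symm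
      have := hsub hx
      simp only [Subgroup.mem_comap] at this
      rw [Subgroup.mem_centralizer_iff] at this
      exact (this (f y) ⟨y, hy, rfl⟩).symm
    rintro x hx y hy
    simp only [Subgroup.mem_map] at hx hy
    obtain ⟨a, ha, rfl⟩ := hx
    obtain ⟨b, hb, rfl⟩ := hy
    exact hcomm a ha b hb
end

section
/- Let X be a proper geodesic δ-hyperbolic space and G a group of isometries of X such that some point of the Gromov boundary ∂X has a finite G-orbit with at least 3 elements. Then G is elliptic, i.e. G has a bounded orbit in X. -/
open Filter

/-- The Gromov product `⟨x, y⟩_o`. -/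
noncomputable def gromovProd {X : Type*} [MetricSpace X] (o x y : X) : ℝ :=
  (dist x o + dist y o - dist x y) / 2

/-- A sequence converges at infinity (defines a point of the Gromov boundary `∂X`)
if the Gromov products of pairs of its terms tend to infinity. -/
def ConvergesAtInfty {X : Type*} [MetricSpace X] (o : X) (u : ℕ → X) : Prop :=
  Tendsto (fun p : ℕ × ℕ => gromovProd o (u p.1) (u p.2)) atTop atTop

/-- Two sequences converging at infinity define the same boundary point if the Gromov
products of their terms tend to infinity. -/
def SameBoundaryPoint {X : Type*} [MetricSpace X] (o : X) (u v : ℕ → X) : Prop :=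
  Tendsto (fun p : ℕ × ℕ => gromovProd o (u p.1) (v p.2)) atTop atTop

section GromovAux

variable {X : Type*} [MetricSpace X]

lemma gp_symm (o x y : X) : gromovProd o x y = gromovProd o y x := by
  unfold gromovProd; rw [dist_comm x y]; ring

lemma gp_base (o o' x y : X) :
    gromovProd o x y ≤ gromovProd o' x y + dist o o' := by
  have h1 : dist x o ≤ dist x o' + dist o' o := dist_triangle x o' o
  have h2 : dist y o ≤ dist y o' + dist o' o := dist_triangle y o' o
  have h3 : dist o' o = dist o o' := dist_comm o' o
  unfold gromovProd; linarith

lemma gp_ultra {δ : ℝ} (hhyp : FourPointHyperbolic X δ) (o x y z : X) {c : ℝ}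
    (h1 : c ≤ gromovProd o x y) (h2 : c ≤ gromovProd o y z) :
    c - δ ≤ gromovProd o x z := by
  have h := hhyp y x z o
  have e1 : dist y x = dist x y := dist_comm y x
  unfold gromovProd at h1 h2 ⊢
  rcases le_total (dist y x + dist z o) (dist y z + dist x o) with hm | hm
  · rw [max_eq_right hm] at h; linarith
  · rw [max_eq_left hm] at h; linarith

lemma gp_chain {δ : ℝ} (hδ : 0 ≤ δ) (hhyp : FourPointHyperbolic X δ)
    (o x y z w : X) {c : ℝ} (h1 : c ≤ gromovProd o x y) (h2 : c ≤ gromovProd o y z)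
    (h3 : c ≤ gromovProd o z w) : c - 2 * δ ≤ gromovProd o x w := by
  have ha := gp_ultra hhyp o x y z h1 h2
  have hb : c - δ ≤ gromovProd o z w := by linarith
  have hc := gp_ultra hhyp o x z w ha hb
  linarith

/-- The pigeonhole "quasi-center" estimate: if three points `a b c` have pairwise
Gromov products bounded by `Kx` at `x` and by `Ky` at `y`, then `dist x y ≤ Kx + Ky + 2δ`. -/
lemma dist_le_pigeonhole {δ Kx Ky : ℝ} (hhyp : FourPointHyperbolic X δ)
    (x y a b c : X)
    (hab : gromovProd x a b ≤ Kx) (hac : gromovProd x a c ≤ Kx)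
    (hbc : gromovProd x b c ≤ Kx)
    (hab' : gromovProd y a b ≤ Ky) (hac' : gromovProd y a c ≤ Ky)
    (hbc' : gromovProd y b c ≤ Ky) :
    dist x y ≤ Kx + Ky + 2 * δ := by
  have hstep : ∀ (z w' : X) (K : ℝ) (p q : X), gromovProd z p q ≤ K →
      gromovProd z w' p ≤ K + δ ∨ gromovProd z w' q ≤ K + δ := by
    intro z w' K p q hpq
    by_contra hcon
    push_neg at hcon
    obtain ⟨c1, c2⟩ := hcon
    have s1 : gromovProd z w' p = gromovProd z p w' := gp_symm z w' p
    have hc1 : min (gromovProd z p w') (gromovProd z w' q) ≤ gromovProd z p w' :=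
      min_le_left _ _
    have hc2 : min (gromovProd z p w') (gromovProd z w' q) ≤ gromovProd z w' q :=
      min_le_right _ _
    have hu := gp_ultra hhyp z p w' q hc1 hc2
    have hcgt : K + δ < min (gromovProd z p w') (gromovProd z w' q) :=
      lt_min (s1 ▸ c1) c2
    linarith
  have Pab := hstep x y Kx a b hab
  have Pac := hstep x y Kx a c hac
  have Pbc := hstep x y Kx b c hbc
  have Qab := hstep y x Ky a b hab'
  have Qac := hstep y x Ky a c hac'
  have Qbc := hstep y x Ky b c hbc'
  have hw : ∃ w, gromovProd x y w ≤ Kx + δ ∧ gromovProd y x w ≤ Ky + δ := by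
    rcases Pab with h1 | h1 <;> rcases Pac with h2 | h2 <;> rcases Pbc with h3 | h3 <;>
      rcases Qab with h4 | h4 <;> rcases Qac with h5 | h5 <;> rcases Qbc with h6 | h6 <;>
      first
        | exact ⟨a, h1, h4⟩ | exact ⟨a, h1, h5⟩ | exact ⟨a, h2, h4⟩ | exact ⟨a, h2, h5⟩
        | exact ⟨b, h1, h4⟩ | exact ⟨b, h1, h6⟩ | exact ⟨b, h3, h4⟩ | exact ⟨b, h3, h6⟩
        | exact ⟨c, h2, h5⟩ | exact ⟨c, h2, h6⟩ | exact ⟨c, h3, h5⟩ | exact ⟨c, h3, h6⟩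
  obtain ⟨w, hw1, hw2⟩ := hw
  have hsum : gromovProd x y w + gromovProd y x w = dist x y := by
    unfold gromovProd
    rw [dist_comm y x, dist_comm w x, dist_comm w y]
    ring
  linarith

/-- Threshold reformulation of `Tendsto _ atTop atTop` for doubly-indexed sequences. -/
lemma tendsto_pair_iff (f : ℕ × ℕ → ℝ) : Tendsto f atTop atTop ↔
    ∀ b : ℝ, ∃ N : ℕ, ∀ n m : ℕ, N ≤ n → N ≤ m → b ≤ f (n, m) := by
  rw [tendsto_atTop]
  constructor
  · intro h b
    obtain ⟨a, ha⟩ := eventually_atTop.mp (h b)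
    exact ⟨max a.1 a.2, fun n m hn hm =>
      ha (n, m) ⟨le_trans (le_max_left _ _) hn, le_trans (le_max_right _ _) hm⟩⟩
  · intro h b
    obtain ⟨N, hN⟩ := h b
    exact eventually_atTop.mpr ⟨(N, N), fun p hp => hN p.1 p.2 hp.1 hp.2⟩

end GromovAux

/-- If a group `G` acts by isometries on a proper geodesic `δ`-hyperbolic space `X`
and some point of the Gromov boundary `∂X` (represented by a sequence `u 0` converging
at infinity) has a finite `G`-orbit with at least `3` elements (represented by the
pairwise distinct boundary points `u 0, …, u (k-1)`), then `G` is elliptic: it has a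
bounded orbit in `X`. -/
theorem elliptic_of_finite_boundary_orbit {X : Type*} [MetricSpace X] [ProperSpace X]
    (δ : ℝ) (hδ : 0 ≤ δ) (hgeo : IsGeodesicSpace X) (hhyp : FourPointHyperbolic X δ)
    {G : Type*} [Group G] [MulAction G X]
    (hiso : ∀ g : G, Isometry fun t : X => g • t)
    (o : X) (k : ℕ) (hk : 3 ≤ k) (u : Fin k → ℕ → X)
    (hconv : ∀ i, ConvergesAtInfty o (u i))
    (hdistinct : ∀ i j, i ≠ j → ¬ SameBoundaryPoint o (u i) (u j))
    (hinv : ∀ (g : G) (i), ∃ j, SameBoundaryPoint o (fun n => g • u i n) (u j))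
    (horbit : ∀ i, ∃ g : G, SameBoundaryPoint o (fun n => g • u ⟨0, by omega⟩ n) (u i)) :
    ∃ x : X, Bornology.IsBounded (Set.range fun g : G => g • x) := by
  classical
  -- threshold form of convergence at infinity
  have hconv' : ∀ (i : Fin k) (b : ℝ), ∃ N, ∀ n m, N ≤ n → N ≤ m →
      b ≤ gromovProd o (u i n) (u i m) := by
    intro i
    exact (tendsto_pair_iff _).mp (hconv i)
  -- isometry invariance of Gromov products
  have hgp_iso : ∀ (h : G) (p x y : X),
      gromovProd (h • p) (h • x) (h • y) = gromovProd p x y := by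
    intro h p x y
    have e : ∀ a b : X, dist (h • a) (h • b) = dist a b := fun a b => (hiso h).dist_eq a b
    unfold gromovProd
    rw [e, e, e]
  -- Step A: separation of distinct boundary points
  have hsep : ∀ p : Fin k × Fin k, ∃ M N, p.1 ≠ p.2 → ∀ n m, N ≤ n → N ≤ m →
      gromovProd o (u p.1 n) (u p.2 m) ≤ M := by
    rintro ⟨i, j⟩
    by_cases hij : i = j
    · exact ⟨0, 0, fun h => absurd hij h⟩
    · have hnt : ¬ Tendsto (fun p : ℕ × ℕ => gromovProd o (u i p.1) (u j p.2))
          atTop atTop := hdistinct i j hij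
      rw [tendsto_pair_iff] at hnt
      push_neg at hnt
      obtain ⟨M0, hM0⟩ := hnt
      obtain ⟨Ni, hNi⟩ := hconv' i (M0 + 2 * δ)
      obtain ⟨Nj, hNj⟩ := hconv' j (M0 + 2 * δ)
      refine ⟨M0 + 2 * δ, max Ni Nj, fun _ n m hn hm => ?_⟩
      by_contra hlt
      push_neg at hlt
      obtain ⟨n0, m0, hn0, hm0, hsmall⟩ := hM0 (max Ni Nj)
      have c1 : M0 + 2 * δ ≤ gromovProd o (u i n0) (u i n) :=
        hNi n0 n (le_trans (le_max_left _ _) hn0) (le_trans (le_max_left _ _) hn)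
      have c2 : M0 + 2 * δ ≤ gromovProd o (u i n) (u j m) := le_of_lt hlt
      have c3 : M0 + 2 * δ ≤ gromovProd o (u j m) (u j m0) :=
        hNj m m0 (le_trans (le_max_right _ _) hm) (le_trans (le_max_right _ _) hm0)
      have hch := gp_chain hδ hhyp o (u i n0) (u i n) (u j m) (u j m0) c1 c2 c3
      linarith
  choose Mf Nf hMN using hsep
  obtain ⟨Ms, hMs⟩ := Finite.exists_le Mf
  obtain ⟨Ns, hNs⟩ := Finite.exists_le Nf
  have hsepA : ∀ i j : Fin k, i ≠ j → ∀ n m, Ns ≤ n → Ns ≤ m →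
      gromovProd o (u i n) (u j m) ≤ Ms := by
    intro i j hij n m hn hm
    exact le_trans
      (hMN (i, j) hij n m (le_trans (hNs (i, j)) hn) (le_trans (hNs (i, j)) hm))
      (hMs (i, j))
  -- uniform bound for every group element
  have key : ∀ g : G, dist o (g • o) ≤ 2 * Ms + 4 * δ := by
    intro g
    choose σ hσ using fun i => hinv g⁻¹ i
    have hσ' : ∀ (i : Fin k) (b : ℝ), ∃ N, ∀ n m, N ≤ n → N ≤ m →
        b ≤ gromovProd o (g⁻¹ • u i n) (u (σ i) m) := by
      intro i
      exact (tendsto_pair_iff _).mp (hσ i)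
    have hiso_eq : ∀ (i j : Fin k) (n m : ℕ),
        gromovProd (g • o) (u i n) (u j m) =
          gromovProd o (g⁻¹ • u i n) (g⁻¹ • u j m) := by
      intro i j n m
      have := hgp_iso g⁻¹ (g • o) (u i n) (u j m)
      rw [inv_smul_smul] at this
      exact this.symm
    -- injectivity of σ
    have hσinj : Function.Injective σ := by
      intro i i' hii'
      by_contra hne
      -- first: the pulled-back sequences define the same boundary point
      have t1 : ∀ b : ℝ, ∃ N, ∀ n m, N ≤ n → N ≤ m →
          b ≤ gromovProd o (g⁻¹ • u i n) (g⁻¹ • u i' m) := by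
        intro b
        obtain ⟨N1, h1⟩ := hσ' i (b + 2 * δ)
        obtain ⟨N2, h2⟩ := hconv' (σ i) (b + 2 * δ)
        obtain ⟨N3, h3⟩ := hσ' i' (b + 2 * δ)
        refine ⟨max N1 (max N2 N3), fun n m hn hm => ?_⟩
        set N := max N1 (max N2 N3) with hNdef
        have hN1 : N1 ≤ N := le_max_left _ _
        have hN2 : N2 ≤ N := le_trans (le_max_left _ _) (le_max_right _ _)
        have hN3 : N3 ≤ N := le_trans (le_max_right _ _) (le_max_right _ _)
        have c1 : b + 2 * δ ≤ gromovProd o (g⁻¹ • u i n) (u (σ i) N) :=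
          h1 n N (le_trans hN1 hn) hN1
        have c2 : b + 2 * δ ≤ gromovProd o (u (σ i) N) (u (σ i) N) :=
          h2 N N hN2 hN2
        have c3 : b + 2 * δ ≤ gromovProd o (u (σ i) N) (g⁻¹ • u i' m) := by
          rw [gp_symm]
          rw [hii']
          exact h3 m N (le_trans hN3 hm) hN3
        have := gp_chain hδ hhyp o (g⁻¹ • u i n) (u (σ i) N) (u (σ i) N)
          (g⁻¹ • u i' m) c1 c2 c3
        linarith
      -- push forward by g : u i and u i' define the same boundary point
      have t2 : Tendsto (fun p : ℕ × ℕ => gromovProd o (u i p.1) (u i' p.2))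
          atTop atTop := by
        rw [tendsto_pair_iff]
        intro b
        obtain ⟨N, hN⟩ := t1 (b + dist o (g • o))
        refine ⟨N, fun n m hn hm => ?_⟩
        have e := hiso_eq i i' n m
        have hb := gp_base (g • o) o (u i n) (u i' m)
        have hd : dist (g • o) o = dist o (g • o) := dist_comm _ _
        have := hN n m hn hm
        rw [← e] at this
        linarith
      exact hdistinct i i' hne t2
    -- Step C: separation of the boundary points based at g • o
    have hsepY : ∀ i j : Fin k, i ≠ j → ∃ N', ∀ n m, N' ≤ n → N' ≤ m →
        gromovProd (g • o) (u i n) (u j m) ≤ Ms + 2 * δ := by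
      intro i j hij
      have hσij : σ i ≠ σ j := fun h => hij (hσinj h)
      obtain ⟨N1, h1⟩ := hσ' i (Ms + 2 * δ + 1)
      obtain ⟨N2, h2⟩ := hσ' j (Ms + 2 * δ + 1)
      refine ⟨max N1 N2, fun n m hn hm => ?_⟩
      by_contra hlt
      push_neg at hlt
      set N := max Ns (max N1 N2) with hNdef
      have hNs' : Ns ≤ N := le_max_left _ _
      have hN1 : N1 ≤ N := le_trans (le_max_left _ _) (le_max_right _ _)
      have hN2 : N2 ≤ N := le_trans (le_max_right _ _) (le_max_right _ _)
      set c := min (Ms + 2 * δ + 1) (gromovProd (g • o) (u i n) (u j m)) with hcdef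
      have hcgt : Ms + 2 * δ < c := lt_min (by linarith) hlt
      have c1 : c ≤ gromovProd o (u (σ i) N) (g⁻¹ • u i n) := by
        rw [gp_symm]
        exact le_trans (min_le_left _ _)
          (h1 n N (le_trans (le_max_left _ _) hn) hN1)
      have c2 : c ≤ gromovProd o (g⁻¹ • u i n) (g⁻¹ • u j m) := by
        rw [← hiso_eq i j n m]
        exact min_le_right _ _
      have c3 : c ≤ gromovProd o (g⁻¹ • u j m) (u (σ j) N) :=
        le_trans (min_le_left _ _)
          (h2 m N (le_trans (le_max_right _ _) hm) hN2)
      have hch := gp_chain hδ hhyp o (u (σ i) N) (g⁻¹ • u i n) (g⁻¹ • u j m)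
        (u (σ j) N) c1 c2 c3
      have hbound := hsepA (σ i) (σ j) hσij N N hNs' hNs'
      linarith
    -- assemble: pick three distinct boundary points and far points on them
    have h3k : (3 : ℕ) ≤ k := hk
    set i0 : Fin k := ⟨0, by omega⟩ with hi0
    set i1 : Fin k := ⟨1, by omega⟩ with hi1
    set i2 : Fin k := ⟨2, by omega⟩ with hi2
    have h01 : i0 ≠ i1 := by simp [hi0, hi1, Fin.ext_iff]
    have h02 : i0 ≠ i2 := by simp [hi0, hi2, Fin.ext_iff]
    have h12 : i1 ≠ i2 := by simp [hi1, hi2, Fin.ext_iff]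
    obtain ⟨N01, hY01⟩ := hsepY i0 i1 h01
    obtain ⟨N02, hY02⟩ := hsepY i0 i2 h02
    obtain ⟨N12, hY12⟩ := hsepY i1 i2 h12
    set n := max Ns (max N01 (max N02 N12)) with hndef
    have hnNs : Ns ≤ n := le_max_left _ _
    have hn01 : N01 ≤ n := le_trans (le_max_left _ _) (le_max_right _ _)
    have hn02 : N02 ≤ n :=
      le_trans (le_trans (le_max_left _ _) (le_max_right _ _)) (le_max_right _ _)
    have hn12 : N12 ≤ n :=
      le_trans (le_trans (le_max_right _ _) (le_max_right _ _)) (le_max_right _ _)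
    have hd := dist_le_pigeonhole hhyp o (g • o) (u i0 n) (u i1 n) (u i2 n)
      (hsepA i0 i1 h01 n n hnNs hnNs)
      (hsepA i0 i2 h02 n n hnNs hnNs)
      (hsepA i1 i2 h12 n n hnNs hnNs)
      (hY01 n n hn01 hn01) (hY02 n n hn02 hn02) (hY12 n n hn12 hn12)
    linarith
  refine ⟨o, ?_⟩
  have hsub : (Set.range fun g : G => g • o) ⊆ Metric.closedBall o (2 * Ms + 4 * δ) := by
    rintro _ ⟨g, rfl⟩
    simp only [Metric.mem_closedBall]
    rw [dist_comm]
    exact key g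
  exact Metric.isBounded_closedBall.subset hsub
end
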